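/- For all integers d ≥ 1 and 1 ≤ k ≤ d, the Eulerian number A_{d,k} equals the d-dimensional volume, normalized by d!, of the slice T_k^d = {x ∈ [0,1]^d : k-1 ≤ x_1 + ... + x_d ≤ k}; i.e., A_{d,k} = d! · Vol(T_k^d). -/

import Mathlib

open MeasureTheory
open scoped ENNReal


/-- The number of descents of a permutation `σ` of `{0, …, d-1}`:
indices `i` with `i + 1 < d` and `σ i > σ (i+1)`. -/
def descents {d : ℕ} (σ : Equiv.Perm (Fin d)) : ℕ :=
  (Finset.univ.filter fun i : Fin d =>
    if h : i.val + 1 < d then σ ⟨i.val + 1, h⟩ < σ i else False).card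

/-- The Eulerian number `A_{d,k}`: permutations of `d` elements with exactly `k-1` descents. -/
def eulerian (d k : ℕ) : ℕ :=
  (Finset.univ.filter fun σ : Equiv.Perm (Fin d) => descents σ = k - 1).card

namespace EulerianVol

variable {d : ℕ}

variable {d : ℕ}

def xe (x : Fin d → ℝ) (m : ℕ) : ℝ := if h : m < d then x ⟨m, h⟩ else 0

def pe (x : Fin d → ℝ) (m : ℕ) : ℝ := if m = 0 then 0 else xe x (m - 1)

def desF (τ : Equiv.Perm (Fin d)) : Finset ℕ :=
  (Finset.range d).filter fun m =>
    if h : m < d ∧ 1 ≤ m then τ.symm ⟨m, h.1⟩ < τ.symm ⟨m - 1, by omega⟩ else False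

def dind (τ : Equiv.Perm (Fin d)) (m : ℕ) : ℝ := if m ∈ desF τ then 1 else 0

def S (y : Fin d → ℝ) (n : ℕ) : ℝ := ∑ m ∈ Finset.range n, xe y m

def Dc (τ : Equiv.Perm (Fin d)) (n : ℕ) : ℕ := ((Finset.range n).filter (· ∈ desF τ)).card

def Gmap (τ : Equiv.Perm (Fin d)) (x : Fin d → ℝ) : Fin d → ℝ :=
  fun j => x j - pe x j.val + dind τ j.val

def Hmap (τ : Equiv.Perm (Fin d)) (y : Fin d → ℝ) : Fin d → ℝ :=
  fun j => S y (j.val + 1) - (Dc τ (j.val + 1) : ℝ)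

def Δ (τ : Equiv.Perm (Fin d)) : Set (Fin d → ℝ) :=
  {x | (∀ i, x i ∈ Set.Ico (0:ℝ) 1) ∧ StrictMono (x ∘ τ)}

def P (τ : Equiv.Perm (Fin d)) : Set (Fin d → ℝ) := Hmap τ ⁻¹' Δ τ

-- basic lemmas
lemma dind_sum (τ : Equiv.Perm (Fin d)) (n : ℕ) :
    ∑ m ∈ Finset.range n, dind τ m = (Dc τ n : ℝ) := by
  unfold dind Dc
  rw [Finset.sum_boole]

lemma telescope (x : Fin d → ℝ) (n : ℕ) :
    ∑ m ∈ Finset.range n, (xe x m - pe x m) = pe x n := by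
  induction n with
  | zero => simp [pe]
  | succ n ih =>
    rw [Finset.sum_range_succ, ih]
    rcases Nat.eq_zero_or_pos n with h | h
    · simp [h, pe]
    · have hn : n ≠ 0 := h.ne'
      simp [pe, hn]

lemma HG (τ : Equiv.Perm (Fin d)) (x : Fin d → ℝ) : Hmap τ (Gmap τ x) = x := by
  funext j
  have hxe : ∀ m ∈ Finset.range (j.val + 1), xe (Gmap τ x) m
      = (xe x m - pe x m) + dind τ m := by
    intro m hm
    have hmd : m < d := lt_of_le_of_lt (Nat.lt_succ_iff.mp (Finset.mem_range.mp hm)) j.isLt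
    simp [xe, Gmap, hmd]
  have : S (Gmap τ x) (j.val + 1) = pe x (j.val + 1) + (Dc τ (j.val + 1) : ℝ) := by
    rw [S, Finset.sum_congr rfl hxe, Finset.sum_add_distrib, telescope, dind_sum]
  have hpe : pe x (j.val + 1) = x j := by
    simp [pe, xe, j.isLt]
  rw [Hmap, this, hpe]; ring

lemma Dc_succ (τ : Equiv.Perm (Fin d)) (n : ℕ) :
    Dc τ (n + 1) = Dc τ n + (if n ∈ desF τ then 1 else 0) := by
  by_cases hmem : n ∈ desF τ
  · simp only [Dc, Finset.range_add_one, Finset.filter_insert, if_pos hmem]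
    rw [Finset.card_insert_of_notMem (by simp)]
  · simp [Dc, Finset.range_add_one, Finset.filter_insert, hmem]

lemma GH (τ : Equiv.Perm (Fin d)) (y : Fin d → ℝ) : Gmap τ (Hmap τ y) = y := by
  funext j
  have hxej : xe y j.val = y j := by simp [xe, j.isLt]
  rcases Nat.eq_zero_or_pos j.val with h0 | h0
  · have hd0 : ¬ ((0:ℕ) ∈ desF τ) := by simp [desF]
    simp only [Gmap, Hmap, pe, h0, dind, S]
    simp [h0, hd0, Dc, Finset.range_one, Finset.filter_singleton, ← hxej]
  · obtain ⟨t, ht⟩ : ∃ t, j.val = t + 1 := ⟨j.val - 1, by omega⟩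
    have htd : t < d := by have := j.isLt; omega
    have hpe : pe (Hmap τ y) j.val = S y (t + 1) - (Dc τ (t + 1) : ℝ) := by
      have : j.val ≠ 0 := by omega
      simp only [pe, if_neg this, ht]
      simp [xe, htd, Hmap]
    have hS : S y (t + 2) = S y (t + 1) + xe y (t + 1) := by
      simp [S, Finset.sum_range_succ]
    have hD : (Dc τ (t + 2) : ℝ) = Dc τ (t + 1) + dind τ (t + 1) := by
      rw [Dc_succ]
      push_cast [dind]
      split <;> simp
    have hxej' : xe y (t + 1) = y j := by rw [← ht]; exact hxej
    have e1 : Hmap τ y j = S y (t + 2) - (Dc τ (t + 2) : ℝ) := by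
      simp [Hmap, ht]
    have e0 : Gmap τ (Hmap τ y) j
        = Hmap τ y j - pe (Hmap τ y) j.val + dind τ j.val := rfl
    have e3 : dind τ j.val = dind τ (t + 1) := by rw [ht]
    rw [e0, e1, hpe, e3, hS, hD, ← hxej']
    have hd1 : dind τ (t + 1) = if (t+1) ∈ desF τ then 1 else 0 := rfl
    ring


lemma xe_add (a b : Fin d → ℝ) (m : ℕ) : xe (a + b) m = xe a m + xe b m := by
  unfold xe; split <;> simp

lemma xe_smul (c : ℝ) (a : Fin d → ℝ) (m : ℕ) : xe (c • a) m = c * xe a m := by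
  unfold xe; split <;> simp

def lS (n : ℕ) : (Fin d → ℝ) →ₗ[ℝ] ℝ where
  toFun y := S y n
  map_add' a b := by simp [S, xe_add, Finset.sum_add_distrib]
  map_smul' c a := by simp [S, xe_smul, Finset.mul_sum]

lemma xe_single (r : Fin d) (m : ℕ) :
    xe (Pi.single r (1:ℝ)) m = if m = r.val then 1 else 0 := by
  unfold xe
  split
  · rename_i h
    rw [Pi.single_apply]
    congr 1
    simp [Fin.ext_iff]
  · rename_i h
    have : m ≠ r.val := by have := r.isLt; omega
    simp [this]

lemma lS_single (r : Fin d) (n : ℕ) :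
    lS n (Pi.single r (1:ℝ)) = if r.val < n then 1 else 0 := by
  show S _ n = _
  unfold S
  simp only [xe_single]
  rw [Finset.sum_ite_eq' (Finset.range n) r.val (fun _ => (1:ℝ))]
  simp

lemma hyperplane_null (l : (Fin d → ℝ) →ₗ[ℝ] ℝ) (hl : l ≠ 0) (c : ℝ) :
    volume {x : Fin d → ℝ | l x = c} = 0 := by
  rcases Set.eq_empty_or_nonempty {x : Fin d → ℝ | l x = c} with h | ⟨x₀, hx₀⟩
  · rw [h]; simp
  · have hx₀' : l x₀ = c := hx₀
    have hset : {x : Fin d → ℝ | l x = c}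
        = (fun x => x + (-x₀)) ⁻¹' ((LinearMap.ker l : Submodule ℝ (Fin d → ℝ)) : Set (Fin d → ℝ)) := by
      ext x
      simp only [Set.mem_preimage, SetLike.mem_coe, LinearMap.mem_ker, map_add, map_neg,
        Set.mem_setOf_eq, hx₀']
      constructor
      · intro h; rw [h]; ring
      · intro h; linarith
    rw [hset, measure_preimage_add_right]
    exact Measure.addHaar_submodule volume _ (by simpa [LinearMap.ker_eq_top] using hl)

noncomputable def Lmap (d : ℕ) : (Fin d → ℝ) →ₗ[ℝ] (Fin d → ℝ) := LinearMap.pi (fun j => lS (j.val + 1))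

lemma Lmap_apply (y : Fin d → ℝ) (j : Fin d) : Lmap d y j = S y (j.val + 1) := rfl

lemma Lmap_det : LinearMap.det (Lmap d) = 1 := by
  rw [← LinearMap.det_toMatrix']
  have hentry : ∀ i j : Fin d, LinearMap.toMatrix' (Lmap d) i j
      = if j.val ≤ i.val then 1 else 0 := by
    intro i j
    rw [LinearMap.toMatrix'_apply]
    have : (fun j' => if j' = j then (1:ℝ) else 0) = Pi.single j 1 := by
      funext j'; rw [Pi.single_apply]
    show lS (i.val + 1) _ = _
    rw [lS_single]
    congr 1
    simp [Nat.lt_succ_iff]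
  rw [Matrix.det_of_lowerTriangular]
  · apply Finset.prod_eq_one
    intro i _
    rw [hentry]
    simp
  · intro i j hij
    rw [hentry]
    have : ¬ (j.val ≤ i.val) := by
      simp only [OrderDual.toDual_lt_toDual] at hij
      exact not_le.mpr hij
    simp [this]

noncomputable def Rlin (τ : Equiv.Perm (Fin d)) : (Fin d → ℝ) →ₗ[ℝ] (Fin d → ℝ) :=
  LinearMap.pi (fun i => LinearMap.proj (τ i))

lemma Rlin_det (τ : Equiv.Perm (Fin d)) :
    LinearMap.det (Rlin τ) = ((Equiv.Perm.sign τ : ℤ) : ℝ) := by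
  rw [← LinearMap.det_toMatrix']
  have : LinearMap.toMatrix' (Rlin τ) = τ.permMatrix ℝ := by
    ext i j
    rw [LinearMap.toMatrix'_apply]
    show (Pi.single j (1:ℝ) : Fin d → ℝ) (τ i) = _
    rw [Pi.single_apply]
    rw [Equiv.Perm.permMatrix, PEquiv.toMatrix_apply, Equiv.toPEquiv_apply]
    simp [eq_comm]
  rw [this, Matrix.det_permutation]


lemma abs_det_Rlin (τ : Equiv.Perm (Fin d)) : |LinearMap.det (Rlin τ)| = 1 := by
  rw [Rlin_det]
  rcases Int.units_eq_one_or (Equiv.Perm.sign τ) with h | h <;> simp [h]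


lemma measurable_Delta (τ : Equiv.Perm (Fin d)) : MeasurableSet (Δ τ) := by
  have hrw : Δ τ = (⋂ i, (fun x : Fin d → ℝ => x i) ⁻¹' Set.Ico (0:ℝ) 1) ∩
      ⋂ (i : Fin d) (j : Fin d) (_ : i < j), {x : Fin d → ℝ | x (τ i) < x (τ j)} := by
    ext x
    constructor
    · rintro ⟨h1, h2⟩
      refine ⟨Set.mem_iInter.2 h1, ?_⟩
      simp only [Set.mem_iInter]
      intro i j hij
      exact h2 hij
    · rintro ⟨h1, h2⟩
      simp only [Set.mem_iInter] at h1 h2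
      exact ⟨h1, fun i j hij => h2 i j hij⟩
  rw [hrw]
  refine MeasurableSet.inter (MeasurableSet.iInter fun i => ?_)
    (MeasurableSet.iInter fun i => MeasurableSet.iInter fun j =>
      MeasurableSet.iInter fun _ => ?_)
  · exact (measurable_pi_apply i) measurableSet_Ico
  · exact measurableSet_lt (measurable_pi_apply _) (measurable_pi_apply _)

lemma strictMono_le_apply {f : Fin d → Fin d} (hf : StrictMono f) (i : Fin d) : i ≤ f i := by
  obtain ⟨n, hn⟩ := i
  induction n with
  | zero => simp [Fin.le_def]
  | succ n ih =>
    have hn' : n < d := by omega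
    have h1 : (⟨n, hn'⟩ : Fin d) ≤ f ⟨n, hn'⟩ := ih hn'
    have h2 : f ⟨n, hn'⟩ < f ⟨n + 1, hn⟩ := hf (by simp [Fin.lt_def])
    have : n < (f ⟨n + 1, hn⟩).val := lt_of_le_of_lt h1 h2
    exact this

lemma perm_strictMono_eq_one (π : Equiv.Perm (Fin d)) (h : StrictMono π) : π = 1 := by
  have hsymm : StrictMono (π.symm : Fin d → Fin d) := by
    intro a b hab
    rcases lt_trichotomy (π.symm a) (π.symm b) with h' | h' | h'
    · exact h'
    · exfalso; rw [← π.apply_symm_apply a, ← π.apply_symm_apply b, h'] at hab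
      exact lt_irrefl _ hab
    · exfalso
      have := h h'
      rw [π.apply_symm_apply, π.apply_symm_apply] at this
      exact absurd hab (not_lt.2 this.le)
  ext i
  have h1 : i ≤ π i := strictMono_le_apply h i
  have h2 : π i ≤ π.symm (π i) := strictMono_le_apply hsymm (π i)
  rw [π.symm_apply_apply] at h2
  exact le_antisymm (Fin.le_def.mp h2) (Fin.le_def.mp h1)

lemma delta_inj {τ τ' : Equiv.Perm (Fin d)} {x : Fin d → ℝ}
    (h : x ∈ Δ τ) (h' : x ∈ Δ τ') : τ = τ' := by
  obtain ⟨-, h2⟩ := h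
  obtain ⟨-, h2'⟩ := h'
  have hxinj : Function.Injective x := by
    have : Function.Injective (x ∘ τ) := h2.injective
    have := this.comp τ.symm.injective
    convert this using 1
    funext i
    simp
  set π : Equiv.Perm (Fin d) := τ.trans τ'.symm with hπ
  have hπmono : StrictMono (π : Fin d → Fin d) := by
    intro a b hab
    have hx : x (τ a) < x (τ b) := h2 hab
    have : x (τ' (π a)) < x (τ' (π b)) := by
      simpa [hπ, Equiv.apply_symm_apply] using hx
    exact (h2'.lt_iff_lt).mp this
  have hid := perm_strictMono_eq_one π hπmono
  ext i
  have hi : τ'.symm (τ i) = i := by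
    have := congrFun (congrArg (fun e : Equiv.Perm (Fin d) => (e : Fin d → Fin d)) hid) i
    simpa [hπ] using this
  have hfin := congrArg τ' hi
  rw [Equiv.apply_symm_apply] at hfin
  exact congrArg Fin.val hfin

lemma delta_pairwise_disjoint :
    Pairwise fun τ τ' : Equiv.Perm (Fin d) => Disjoint (Δ τ) (Δ τ') := by
  intro τ τ' hne
  rw [Set.disjoint_left]
  intro x hx hx'
  exact hne (delta_inj hx hx')

lemma cube_subset_union :
    {x : Fin d → ℝ | ∀ i, x i ∈ Set.Ico (0:ℝ) 1} ⊆
      (⋃ τ : Equiv.Perm (Fin d), Δ τ) ∪ {x | ¬ Function.Injective x} := by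
  intro x hx
  by_cases hinj : Function.Injective x
  · left
    refine Set.mem_iUnion.2 ⟨Tuple.sort x, hx, ?_⟩
    exact (Tuple.monotone_sort x).strictMono_of_injective (hinj.comp (Tuple.sort x).injective)
  · right; exact hinj

lemma noninj_null : volume {x : Fin d → ℝ | ¬ Function.Injective x} = 0 := by
  have hsub : {x : Fin d → ℝ | ¬ Function.Injective x} ⊆
      ⋃ p : {p : Fin d × Fin d // p.1 ≠ p.2}, {x : Fin d → ℝ | x p.1.1 = x p.1.2} := by
    intro x hx
    simp only [Function.Injective, not_forall] at hx
    obtain ⟨i, j, hij, hne⟩ := hx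
    exact Set.mem_iUnion.2 ⟨⟨(i, j), hne⟩, hij⟩
  refine measure_mono_null hsub (measure_iUnion_null fun p => ?_)
  set l : (Fin d → ℝ) →ₗ[ℝ] ℝ :=
    (LinearMap.proj (R := ℝ) (φ := fun _ : Fin d => ℝ) p.1.1)
      - (LinearMap.proj (R := ℝ) (φ := fun _ : Fin d => ℝ) p.1.2) with hldef
  have hset : {x : Fin d → ℝ | x p.1.1 = x p.1.2} = {x : Fin d → ℝ | l x = 0} := by
    ext x
    simp [hldef, sub_eq_zero]
  rw [hset]
  apply hyperplane_null
  intro hzero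
  have := congrFun (congrArg (fun l : (Fin d → ℝ) →ₗ[ℝ] ℝ => (l : (Fin d → ℝ) → ℝ)) hzero)
    (Pi.single p.1.1 (1:ℝ))
  simp only [hldef, LinearMap.sub_apply, LinearMap.proj_apply, LinearMap.zero_apply,
    Pi.single_apply] at this
  rw [if_neg (Ne.symm p.2)] at this
  norm_num at this

lemma cube_vol : volume {x : Fin d → ℝ | ∀ i, x i ∈ Set.Ico (0:ℝ) 1} = 1 := by
  have hrw : {x : Fin d → ℝ | ∀ i, x i ∈ Set.Ico (0:ℝ) 1}
      = Set.pi Set.univ (fun _ : Fin d => Set.Ico (0:ℝ) 1) := by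
    ext x; simp [Set.mem_pi]
  rw [hrw, volume_pi_pi]
  simp

lemma delta_preimage (τ : Equiv.Perm (Fin d)) : Δ τ = (Rlin τ) ⁻¹' (Δ 1) := by
  ext x
  simp only [Δ, Set.mem_preimage, Set.mem_setOf_eq]
  constructor
  · rintro ⟨h1, h2⟩
    exact ⟨fun i => h1 (τ i), fun a b hab => h2 hab⟩
  · rintro ⟨h1, h2⟩
    refine ⟨fun i => ?_, fun a b hab => h2 hab⟩
    have := h1 (τ.symm i)
    rw [show (Rlin τ) x (τ.symm i) = x (τ (τ.symm i)) from rfl, Equiv.apply_symm_apply] at this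
    exact this
lemma vol_delta_eq (τ : Equiv.Perm (Fin d)) : volume (Δ τ) = volume (Δ (1 : Equiv.Perm (Fin d))) := by
  rw [delta_preimage τ]
  rw [Measure.addHaar_preimage_linearMap volume
    (by rw [← abs_ne_zero, abs_det_Rlin]; norm_num)]
  rw [abs_inv, abs_det_Rlin]
  simp

lemma factorial_mul_vol_delta :
    (Nat.factorial d : ℝ≥0∞) * volume (Δ (1 : Equiv.Perm (Fin d))) = 1 := by
  have hunion : volume (⋃ τ : Equiv.Perm (Fin d), Δ τ)
      = ∑' τ : Equiv.Perm (Fin d), volume (Δ τ) :=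
    measure_iUnion delta_pairwise_disjoint fun τ => measurable_Delta τ
  have hsum : ∑' τ : Equiv.Perm (Fin d), volume (Δ τ)
      = (Nat.factorial d : ℝ≥0∞) * volume (Δ (1 : Equiv.Perm (Fin d))) := by
    rw [tsum_fintype]
    rw [Finset.sum_congr rfl (fun τ _ => vol_delta_eq τ)]
    rw [Finset.sum_const, Finset.card_univ, Fintype.card_perm, Fintype.card_fin, nsmul_eq_mul]
  have hle : volume (⋃ τ : Equiv.Perm (Fin d), Δ τ) ≤ 1 := by
    rw [← cube_vol]
    refine measure_mono (Set.iUnion_subset fun τ => fun x hx => hx.1)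
  have hge : (1 : ℝ≥0∞) ≤ volume (⋃ τ : Equiv.Perm (Fin d), Δ τ) := by
    calc (1 : ℝ≥0∞) = volume {x : Fin d → ℝ | ∀ i, x i ∈ Set.Ico (0:ℝ) 1} := cube_vol.symm
    _ ≤ volume ((⋃ τ : Equiv.Perm (Fin d), Δ τ) ∪ {x | ¬ Function.Injective x}) :=
        measure_mono cube_subset_union
    _ ≤ volume (⋃ τ : Equiv.Perm (Fin d), Δ τ) + volume {x : Fin d → ℝ | ¬ Function.Injective x} :=
        measure_union_le _ _
    _ = volume (⋃ τ : Equiv.Perm (Fin d), Δ τ) := by rw [noninj_null, add_zero]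
  rw [← hsum, ← hunion]
  exact le_antisymm hle hge

noncomputable def Dvec (τ : Equiv.Perm (Fin d)) : Fin d → ℝ := fun j => (Dc τ (j.val + 1) : ℝ)

lemma vol_P (τ : Equiv.Perm (Fin d)) : volume (P τ) = volume (Δ τ) := by
  have hrw : P τ = (Lmap d) ⁻¹' ((fun z : Fin d → ℝ => z + (-(Dvec τ))) ⁻¹' Δ τ) := by
    have hH : Hmap τ = fun y => Lmap d y + (-(Dvec τ)) := by
      funext y j
      simp [Hmap, Lmap_apply, Dvec, sub_eq_add_neg]
    rw [P, hH]
    rfl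
  rw [hrw]
  rw [Measure.addHaar_preimage_linearMap volume (by rw [Lmap_det]; norm_num)]
  rw [measure_preimage_add_right]
  rw [Lmap_det]
  norm_num

def slice' (d k : ℕ) : Set (Fin d → ℝ) :=
  {y | (∀ i, y i ∈ Set.Ico (0:ℝ) 1) ∧ ((k:ℝ) - 1 ≤ ∑ i, y i ∧ ∑ i, y i < (k:ℝ))}

lemma sum_eq_S (y : Fin d → ℝ) : ∑ i, y i = S y d := by
  rw [S, ← Fin.sum_univ_eq_sum_range (fun m => xe y m) d]
  exact Finset.sum_congr rfl fun i _ => by simp [xe, i.isLt]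

lemma Dc_d (τ : Equiv.Perm (Fin d)) : Dc τ d = (desF τ).card := by
  rw [Dc]
  congr 1
  ext m
  simp only [Finset.mem_filter]
  constructor
  · exact fun h => h.2
  · intro h
    exact ⟨Finset.mem_of_mem_filter m h, h⟩

lemma mem_desF_elim {τ : Equiv.Perm (Fin d)} {m : ℕ} (h : m ∈ desF τ) :
    ∃ (h2 : m < d) (_ : 1 ≤ m), τ.symm ⟨m, h2⟩ < τ.symm ⟨m - 1, by omega⟩ := by
  rw [desF, Finset.mem_filter, Finset.mem_range] at h
  obtain ⟨h2, hcond⟩ := h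
  by_cases hc : m < d ∧ 1 ≤ m
  · rw [dif_pos hc] at hcond
    exact ⟨h2, hc.2, hcond⟩
  · rw [dif_neg hc] at hcond
    exact absurd hcond (by simp)

lemma mem_desF_intro {τ : Equiv.Perm (Fin d)} {m : ℕ} (h2 : m < d) (h1 : 1 ≤ m)
    (h : τ.symm ⟨m, h2⟩ < τ.symm ⟨m - 1, by omega⟩) : m ∈ desF τ := by
  rw [desF, Finset.mem_filter, Finset.mem_range]
  refine ⟨h2, ?_⟩
  rw [dif_pos (⟨h2, h1⟩ : m < d ∧ 1 ≤ m)]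
  exact h

lemma mem_desF_iff {τ : Equiv.Perm (Fin d)} {x : Fin d → ℝ} (hx : StrictMono (x ∘ τ))
    {m : ℕ} (h1 : 1 ≤ m) (h2 : m < d) :
    m ∈ desF τ ↔ x ⟨m, h2⟩ < x ⟨m - 1, by omega⟩ := by
  have key : ∀ a b : Fin d, (τ.symm a < τ.symm b ↔ x a < x b) := by
    intro a b
    rw [← hx.lt_iff_lt]
    simp [Function.comp]
  constructor
  · intro h
    obtain ⟨h2', _, hlt⟩ := mem_desF_elim h
    exact (key _ _).mp hlt
  · intro h
    exact mem_desF_intro h2 h1 ((key _ _).mpr h)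

lemma measurable_Hmap (τ : Equiv.Perm (Fin d)) : Measurable (Hmap τ) := by
  apply measurable_pi_lambda
  intro j
  apply Measurable.sub ?_ measurable_const
  apply Finset.measurable_sum
  intro m _
  by_cases h : m < d
  · simp only [xe, dif_pos h]
    exact measurable_pi_apply _
  · simp only [xe, dif_neg h]
    exact measurable_const

lemma measurable_P (τ : Equiv.Perm (Fin d)) : MeasurableSet (P τ) :=
  (measurable_Hmap τ) (measurable_Delta τ)

lemma P_pairwise_disjoint :
    Pairwise fun τ τ' : Equiv.Perm (Fin d) => Disjoint (P τ) (P τ') := by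
  intro τ τ' hne
  rw [Set.disjoint_left]
  intro y hy hy'
  have hy1 : Hmap τ y ∈ Δ τ := hy
  have hy2 : Hmap τ' y ∈ Δ τ' := hy'
  have heq : Hmap τ y = Hmap τ' y := by
    funext j
    have h1 := hy1.1 j
    have h2 := hy2.1 j
    have hsub : Hmap τ y j - Hmap τ' y j
        = ((Dc τ' (j.val + 1) : ℤ) - (Dc τ (j.val + 1) : ℤ) : ℤ) := by
      simp [Hmap]
    have hb1 : -1 < Hmap τ y j - Hmap τ' y j := by
      obtain ⟨a1, a2⟩ := h1; obtain ⟨b1, b2⟩ := h2; linarith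
    have hb2 : Hmap τ y j - Hmap τ' y j < 1 := by
      obtain ⟨a1, a2⟩ := h1; obtain ⟨b1, b2⟩ := h2; linarith
    rw [hsub] at hb1 hb2
    have hz : ((Dc τ' (j.val + 1) : ℤ) - (Dc τ (j.val + 1) : ℤ)) = 0 := by
      have e1 : (-1 : ℤ) < (Dc τ' (j.val + 1) : ℤ) - (Dc τ (j.val + 1) : ℤ) := by
        exact_mod_cast hb1
      have e2 : ((Dc τ' (j.val + 1) : ℤ) - (Dc τ (j.val + 1) : ℤ)) < 1 := by
        exact_mod_cast hb2
      omega
    have hzero : Hmap τ y j - Hmap τ' y j = 0 := by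
      rw [hsub, hz]
      norm_num
    linarith
  rw [heq] at hy1
  exact hne (delta_inj hy1 hy2)

lemma P_subset_slice {k : ℕ} (hk1 : 1 ≤ k) (hd : 1 ≤ d) {τ : Equiv.Perm (Fin d)}
    (hτ : (desF τ).card = k - 1) : P τ ⊆ slice' d k := by
  intro y hy
  have hx : Hmap τ y ∈ Δ τ := hy
  obtain ⟨hxco, hxmono⟩ := hx
  set x := Hmap τ y with hxdef
  have hyx : Gmap τ x = y := GH τ y
  have hcast : (Dc τ d : ℝ) = (k : ℝ) - 1 := by
    rw [Dc_d, hτ]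
    push_cast [hk1]
    ring
  constructor
  · intro j
    rw [← hyx]
    rcases Nat.eq_zero_or_pos j.val with h0 | h0
    · have hd0 : dind τ j.val = 0 := by
        rw [h0]
        have : (0:ℕ) ∉ desF τ := by
          intro hmem
          obtain ⟨_, h1, _⟩ := mem_desF_elim hmem
          omega
        simp [dind, this]
      have hpe0 : pe x j.val = 0 := by simp [pe, h0]
      have : Gmap τ x j = x j := by
        simp [Gmap, hd0, hpe0]
      rw [this]
      exact hxco j
    · obtain ⟨t, ht⟩ : ∃ t, j.val = t + 1 := ⟨j.val - 1, by omega⟩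
      have htd1 : t + 1 < d := ht ▸ j.isLt
      have htd : t < d := by omega
      have hG : Gmap τ x j = x j - x ⟨t, htd⟩ + dind τ (t + 1) := by
        rw [Gmap, ht]
        congr 1
        simp [pe, xe, htd]
      have hxj : x j = x ⟨t + 1, htd1⟩ := by
        congr 1
        exact Fin.ext ht
      have hdes := mem_desF_iff hxmono (by omega : 1 ≤ t + 1) htd1
      obtain ⟨c0, c1⟩ := hxco j
      obtain ⟨c2, c3⟩ := hxco ⟨t, htd⟩
      by_cases hmem : (t + 1) ∈ desF τ
      · have hlt : x ⟨t + 1, htd1⟩ < x ⟨t, htd⟩ := by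
          have := hdes.mp hmem
          simpa using this
        have hdind : dind τ (t + 1) = 1 := by simp [dind, hmem]
        rw [hG, hdind]
        rw [hxj] at c0 c1 ⊢
        constructor <;> [linarith; linarith]
      · have hge : ¬ (x ⟨t + 1, htd1⟩ < x ⟨t, htd⟩) := by
          intro hcon
          exact hmem (hdes.mpr (by simpa using hcon))
        push_neg at hge
        have hdind : dind τ (t + 1) = 0 := by simp [dind, hmem]
        rw [hG, hdind]
        rw [hxj] at c0 c1 ⊢
        constructor <;> [linarith; linarith]
  · have hd1 : d - 1 < d := by omega
    have hlast : x ⟨d - 1, hd1⟩ = S y d - (Dc τ d : ℝ) := by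
      rw [hxdef]
      show S y ((d-1) + 1) - (Dc τ ((d-1) + 1) : ℝ) = _
      have hdd : d - 1 + 1 = d := by omega
      rw [hdd]
    obtain ⟨c0, c1⟩ := hxco ⟨d - 1, hd1⟩
    rw [hlast, hcast] at c0 c1
    rw [sum_eq_S]
    constructor <;> linarith

lemma slice_mem {k : ℕ} (hk1 : 1 ≤ k) (hd : 1 ≤ d) {y : Fin d → ℝ} (hy : y ∈ slice' d k)
    (hinj : Function.Injective (fun j : Fin d => Int.fract (S y (j.val + 1)))) :
    ∃ τ : Equiv.Perm (Fin d), (desF τ).card = k - 1 ∧ y ∈ P τ := by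
  obtain ⟨hyco, hysum1, hysum2⟩ := hy
  set x : Fin d → ℝ := fun j => Int.fract (S y (j.val + 1)) with hxdef
  set τ : Equiv.Perm (Fin d) := Tuple.sort x with hτdef
  have hxmono : StrictMono (x ∘ τ) :=
    (Tuple.monotone_sort x).strictMono_of_injective (hinj.comp τ.injective)
  have hxe : ∀ n, n < d → xe y n ∈ Set.Ico (0:ℝ) 1 := by
    intro n hn
    simpa [xe, hn] using hyco ⟨n, hn⟩
  -- main floor claim
  have claim : ∀ n, n ≤ d → (⌊S y n⌋ : ℤ) = (Dc τ n : ℤ) := by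
    intro n
    induction n with
    | zero => intro _; simp [S, Dc]
    | succ n ih =>
      intro hnd
      have hn : n < d := by omega
      have ihn := ih (by omega)
      have hSs : S y (n + 1) = S y n + xe y n := by
        rw [S, S, Finset.sum_range_succ]
      have hyn := hxe n hn
      have hDc : (Dc τ (n + 1) : ℤ) = Dc τ n + (if n ∈ desF τ then 1 else 0) := by
        rw [Dc_succ]
        push_cast
        split <;> simp
      rcases Nat.eq_zero_or_pos n with h0 | h0
      · subst h0
        have hS1 : S y 1 = xe y 0 := by simp [hSs, S]
        have hfl : ⌊S y 1⌋ = 0 := by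
          rw [hS1, Int.floor_eq_zero_iff]
          exact hyn
        have h0des : (0:ℕ) ∉ desF τ := by
          intro hmem
          obtain ⟨_, h1, _⟩ := mem_desF_elim hmem
          omega
        rw [hfl, hDc, if_neg h0des]
        simp [Dc]
      · -- n ≥ 1
        have hfr1 : Int.fract (S y (n + 1)) = x ⟨n, hn⟩ := by rw [hxdef]
        have hfr0 : Int.fract (S y n) = x ⟨n - 1, by omega⟩ := by
          rw [hxdef]
          show _ = Int.fract (S y ((n-1) + 1))
          have hnn : n - 1 + 1 = n := by omega
          rw [hnn]
        have hx1 := Int.fract_nonneg (S y (n+1))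
        have hx2 := Int.fract_lt_one (S y (n+1))
        have hx3 := Int.fract_nonneg (S y n)
        have hx4 := Int.fract_lt_one (S y n)
        have hdec1 : S y (n + 1) = (⌊S y (n + 1)⌋ : ℝ) + x ⟨n, hn⟩ := by
          rw [← hfr1, Int.floor_add_fract]
        have hdec0 : S y n = (⌊S y n⌋ : ℝ) + x ⟨n - 1, by omega⟩ := by
          rw [← hfr0, Int.floor_add_fract]
        rw [hfr1] at hx1 hx2
        rw [hfr0] at hx3 hx4
        have hδreal : (⌊S y (n + 1)⌋ : ℝ) - (⌊S y n⌋ : ℝ)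
            = xe y n - x ⟨n, hn⟩ + x ⟨n - 1, by omega⟩ := by
          have := hSs
          linarith
        have hδint : ⌊S y (n + 1)⌋ - ⌊S y n⌋ = 0 ∨ ⌊S y (n + 1)⌋ - ⌊S y n⌋ = 1 := by
          obtain ⟨e1, e2⟩ := hyn
          have l1 : (-1 : ℝ) < (⌊S y (n + 1)⌋ : ℝ) - (⌊S y n⌋ : ℝ) := by
            rw [hδreal]; linarith
          have l2 : (⌊S y (n + 1)⌋ : ℝ) - (⌊S y n⌋ : ℝ) < 2 := by
            rw [hδreal]; linarith
          have l1' : (-1 : ℤ) < ⌊S y (n + 1)⌋ - ⌊S y n⌋ := by exact_mod_cast l1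
          have l2' : ⌊S y (n + 1)⌋ - ⌊S y n⌋ < 2 := by exact_mod_cast l2
          omega
        have hdes := mem_desF_iff hxmono (h0 : 1 ≤ n) hn
        rcases hδint with hδ0 | hδ1
        · have hflooreq : (⌊S y (n + 1)⌋ : ℝ) = (⌊S y n⌋ : ℝ) := by
            have : ⌊S y (n + 1)⌋ = ⌊S y n⌋ := by omega
            exact_mod_cast this
          have hxeq : x ⟨n, hn⟩ - x ⟨n - 1, by omega⟩ = xe y n := by
            rw [hflooreq] at hδreal
            linarith
          have hnotdes : n ∉ desF τ := by
            rw [hdes]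
            obtain ⟨e1, _⟩ := hyn
            intro hcon
            linarith
          rw [hDc, if_neg hnotdes, ← ihn]
          omega
        · have hmemdes : n ∈ desF τ := by
            rw [hdes]
            obtain ⟨e1, e2⟩ := hyn
            have : x ⟨n - 1, by omega⟩ - x ⟨n, hn⟩ = 1 - xe y n := by
              have hflooreq : (⌊S y (n + 1)⌋ : ℝ) = (⌊S y n⌋ : ℝ) + 1 := by
                have : ⌊S y (n + 1)⌋ = ⌊S y n⌋ + 1 := by omega
                exact_mod_cast this
              rw [hflooreq] at hδreal
              linarith
            linarith
          rw [hDc, if_pos hmemdes, ← ihn]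
          omega
  have hDcd : (desF τ).card = k - 1 := by
    have h1 := claim d le_rfl
    have hS1 : (k : ℝ) - 1 ≤ S y d := by rw [← sum_eq_S]; exact hysum1
    have hS2 : S y d < (k : ℝ) := by rw [← sum_eq_S]; exact hysum2
    have hfl : ⌊S y d⌋ = (k : ℤ) - 1 := by
      rw [Int.floor_eq_iff]
      constructor
      · push_cast; linarith
      · push_cast; linarith
    rw [hfl] at h1
    have h2 : Dc τ d = (desF τ).card := Dc_d τ
    omega
  refine ⟨τ, hDcd, ?_⟩
  show Hmap τ y ∈ Δ τ
  have hHx : Hmap τ y = x := by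
    funext j
    have hcl := claim (j.val + 1) (by have := j.isLt; omega)
    show S y (j.val + 1) - (Dc τ (j.val + 1) : ℝ) = x j
    have hcast2 : ((Dc τ (j.val + 1) : ℤ) : ℝ) = ((⌊S y (j.val + 1)⌋ : ℤ) : ℝ) := by
      rw [hcl]
    show S y (j.val + 1) - (Dc τ (j.val + 1) : ℝ) = Int.fract (S y (j.val + 1))
    rw [Int.fract]
    push_cast at hcast2 ⊢
    linarith
  rw [hHx]
  exact ⟨fun j => ⟨Int.fract_nonneg _, Int.fract_lt_one _⟩, hxmono⟩

lemma fract_noninj_null :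
    volume {y : Fin d → ℝ |
      ¬ Function.Injective (fun j : Fin d => Int.fract (S y (j.val + 1)))} = 0 := by
  have hsub : {y : Fin d → ℝ |
      ¬ Function.Injective (fun j : Fin d => Int.fract (S y (j.val + 1)))} ⊆
      ⋃ (p : {p : Fin d × Fin d // p.1 ≠ p.2}) (n : ℤ),
        {y : Fin d → ℝ | ((lS (p.1.1.val + 1) - lS (p.1.2.val + 1) : (Fin d → ℝ) →ₗ[ℝ] ℝ)) y = (n : ℝ)} := by
    intro y hy
    simp only [Set.mem_setOf_eq, Function.Injective, not_forall] at hy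
    obtain ⟨i, j, hij, hne⟩ := hy
    refine Set.mem_iUnion.2 ⟨⟨(i, j), hne⟩, Set.mem_iUnion.2
      ⟨⌊S y (i.val + 1)⌋ - ⌊S y (j.val + 1)⌋, ?_⟩⟩
    show ((lS (i.val + 1) - lS (j.val + 1) : (Fin d → ℝ) →ₗ[ℝ] ℝ)) y = _
    rw [LinearMap.sub_apply]
    show S y (i.val + 1) - S y (j.val + 1) = _
    rw [Int.fract, Int.fract] at hij
    push_cast
    linarith
  refine measure_mono_null hsub
    (measure_iUnion_null fun p => measure_iUnion_null fun n => ?_)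
  apply hyperplane_null
  intro hzero
  obtain ⟨⟨i, j⟩, hne⟩ := p
  rcases hne.lt_or_gt with hlt | hlt
  · have := DFunLike.congr_fun hzero (Pi.single j (1:ℝ))
    simp only [LinearMap.sub_apply, lS_single, LinearMap.zero_apply] at this
    rw [if_neg (by simp only [Fin.lt_def] at hlt; omega), if_pos (by omega)] at this
    norm_num at this
  · have := DFunLike.congr_fun hzero (Pi.single i (1:ℝ))
    simp only [LinearMap.sub_apply, lS_single, LinearMap.zero_apply] at this
    rw [if_pos (by omega), if_neg (by simp only [Fin.lt_def] at hlt; omega)] at this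
    norm_num at this

lemma vol_slice' (k : ℕ) (hk1 : 1 ≤ k) (hd : 1 ≤ d) :
    volume (slice' d k) = ((Finset.univ.filter fun τ : Equiv.Perm (Fin d) =>
      (desF τ).card = k - 1).card : ℝ≥0∞) * volume (Δ (1 : Equiv.Perm (Fin d))) := by
  classical
  set T := Finset.univ.filter fun τ : Equiv.Perm (Fin d) => (desF τ).card = k - 1 with hT
  have hU : volume (⋃ τ ∈ T, P τ) = ∑ τ ∈ T, volume (P τ) := by
    apply measure_biUnion_finset
    · intro τ _ τ' _ hne
      exact P_pairwise_disjoint hne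
    · intro τ _
      exact measurable_P τ
  have hPv : ∀ τ ∈ T, volume (P τ) = volume (Δ (1 : Equiv.Perm (Fin d))) := by
    intro τ _
    rw [vol_P τ, vol_delta_eq τ]
  have hsumv : ∑ τ ∈ T, volume (P τ) = (T.card : ℝ≥0∞) * volume (Δ (1 : Equiv.Perm (Fin d))) := by
    rw [Finset.sum_congr rfl hPv, Finset.sum_const, nsmul_eq_mul]
  apply le_antisymm
  · have hsub2 : slice' d k ⊆ (⋃ τ ∈ T, P τ) ∪ {y : Fin d → ℝ |
        ¬ Function.Injective (fun j : Fin d => Int.fract (S y (j.val + 1)))} := by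
      intro y hy
      by_cases hinj : Function.Injective (fun j : Fin d => Int.fract (S y (j.val + 1)))
      · obtain ⟨τ, hcard, hP⟩ := slice_mem hk1 hd hy hinj
        left
        exact Set.mem_biUnion (Finset.mem_filter.mpr ⟨Finset.mem_univ _, hcard⟩) hP
      · right
        exact hinj
    calc volume (slice' d k)
        ≤ volume ((⋃ τ ∈ T, P τ) ∪ {y : Fin d → ℝ |
            ¬ Function.Injective (fun j : Fin d => Int.fract (S y (j.val + 1)))}) :=
          measure_mono hsub2
      _ ≤ volume (⋃ τ ∈ T, P τ) + volume {y : Fin d → ℝ |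
            ¬ Function.Injective (fun j : Fin d => Int.fract (S y (j.val + 1)))} :=
          measure_union_le _ _
      _ = volume (⋃ τ ∈ T, P τ) := by rw [fract_noninj_null, add_zero]
      _ = _ := by rw [hU, hsumv]
  · have hsub1 : (⋃ τ ∈ T, P τ) ⊆ slice' d k := by
      intro y hy
      simp only [Set.mem_iUnion] at hy
      obtain ⟨τ, hτ, hyP⟩ := hy
      exact P_subset_slice hk1 hd (by simpa [hT] using hτ) hyP
    calc (T.card : ℝ≥0∞) * volume (Δ (1 : Equiv.Perm (Fin d)))
        = volume (⋃ τ ∈ T, P τ) := by rw [hU, hsumv]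
      _ ≤ volume (slice' d k) := measure_mono hsub1

lemma vol_slice_thm (k : ℕ) (hk1 : 1 ≤ k) (hd : 1 ≤ d) :
    volume {x : Fin d → ℝ | (∀ i, x i ∈ Set.Icc (0 : ℝ) 1) ∧
        (k : ℝ) - 1 ≤ ∑ i, x i ∧ ∑ i, x i ≤ (k : ℝ)}
      = volume (slice' d k) := by
  apply le_antisymm
  · have hsub : {x : Fin d → ℝ | (∀ i, x i ∈ Set.Icc (0 : ℝ) 1) ∧
        (k : ℝ) - 1 ≤ ∑ i, x i ∧ ∑ i, x i ≤ (k : ℝ)} ⊆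
        slice' d k ∪ ({y : Fin d → ℝ | lS (d := d) d y = (k : ℝ)} ∪
          ⋃ i : Fin d, {y : Fin d → ℝ | y i = 1}) := by
      intro y hy
      obtain ⟨hco, hs1, hs2⟩ := hy
      by_cases hc1 : ∀ i, y i < 1
      · by_cases hc2 : ∑ i, y i < (k : ℝ)
        · exact Or.inl ⟨fun i => ⟨(hco i).1, hc1 i⟩, hs1, hc2⟩
        · refine Or.inr (Or.inl ?_)
          show S y d = (k : ℝ)
          rw [← sum_eq_S]
          linarith [not_lt.mp hc2]
      · push_neg at hc1
        obtain ⟨i, hi⟩ := hc1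
        exact Or.inr (Or.inr (Set.mem_iUnion.2 ⟨i, le_antisymm (hco i).2 hi⟩))
    have hnull1 : volume {y : Fin d → ℝ | lS (d := d) d y = (k : ℝ)} = 0 := by
      apply hyperplane_null
      intro hzero
      have := DFunLike.congr_fun hzero (Pi.single (⟨0, hd⟩ : Fin d) (1:ℝ))
      rw [lS_single] at this
      simp only [LinearMap.zero_apply] at this
      rw [if_pos (show 0 < d by omega)] at this
      norm_num at this
    have hnull2 : volume (⋃ i : Fin d, {y : Fin d → ℝ | y i = 1}) = 0 := by
      apply measure_iUnion_null
      intro i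
      have hset : {y : Fin d → ℝ | y i = 1}
          = {y : Fin d → ℝ | (LinearMap.proj (R := ℝ) (φ := fun _ : Fin d => ℝ) i) y = 1} := rfl
      rw [hset]
      apply hyperplane_null
      intro hzero
      have := DFunLike.congr_fun hzero (Pi.single i (1:ℝ))
      simp at this
    calc volume {x : Fin d → ℝ | (∀ i, x i ∈ Set.Icc (0 : ℝ) 1) ∧
        (k : ℝ) - 1 ≤ ∑ i, x i ∧ ∑ i, x i ≤ (k : ℝ)}
        ≤ volume (slice' d k) + volume ({y : Fin d → ℝ | lS (d := d) d y = (k : ℝ)} ∪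
          ⋃ i : Fin d, {y : Fin d → ℝ | y i = 1}) :=
          le_trans (measure_mono hsub) (measure_union_le _ _)
      _ ≤ volume (slice' d k) + (volume {y : Fin d → ℝ | lS (d := d) d y = (k : ℝ)}
          + volume (⋃ i : Fin d, {y : Fin d → ℝ | y i = 1})) := by
          gcongr
          exact measure_union_le _ _
      _ = volume (slice' d k) := by rw [hnull1, hnull2, add_zero, add_zero]
  · apply measure_mono
    rintro y ⟨hco, hs1, hs2⟩
    exact ⟨fun i => ⟨(hco i).1, (hco i).2.le⟩, hs1, hs2.le⟩

lemma mem_descents_elim {σ : Equiv.Perm (Fin d)} {i : Fin d}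
    (h : i ∈ Finset.univ.filter fun i : Fin d =>
      if h : i.val + 1 < d then σ ⟨i.val + 1, h⟩ < σ i else False) :
    ∃ (hh : i.val + 1 < d), σ ⟨i.val + 1, hh⟩ < σ i := by
  rw [Finset.mem_filter] at h
  obtain ⟨-, hcond⟩ := h
  by_cases hc : i.val + 1 < d
  · rw [dif_pos hc] at hcond
    exact ⟨hc, hcond⟩
  · rw [dif_neg hc] at hcond
    exact absurd hcond (by simp)

lemma card_desF (τ : Equiv.Perm (Fin d)) : (desF τ).card = descents τ.symm := by
  rw [descents]
  apply Finset.card_bij'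
    (i := fun m hm => (⟨m - 1, by
      obtain ⟨h2, h1, _⟩ := mem_desF_elim hm
      omega⟩ : Fin d))
    (j := fun i _ => i.val + 1)
  · intro m hm
    obtain ⟨h2, h1, hlt⟩ := mem_desF_elim hm
    rw [Finset.mem_filter]
    refine ⟨Finset.mem_univ _, ?_⟩
    have hm1 : m - 1 + 1 = m := by omega
    rw [dif_pos (show (m : ℕ) - 1 + 1 < d by omega)]
    simp only [hm1]
    exact hlt
  · intro m hm
    obtain ⟨h2, h1, _⟩ := mem_desF_elim hm
    simp
    omega
  · intro i hi
    exact Fin.ext (by simp)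
  · intro i hi
    obtain ⟨hh, hlt⟩ := mem_descents_elim hi
    apply mem_desF_intro hh (by omega)
    have : i.val + 1 - 1 = i.val := by omega
    simp only [this]
    simpa using hlt

lemma T_card (k : ℕ) :
    (Finset.univ.filter fun τ : Equiv.Perm (Fin d) => (desF τ).card = k - 1).card
      = eulerian d k := by
  rw [eulerian]
  apply Finset.card_bij (fun τ _ => τ.symm)
  · intro τ hτ
    rw [Finset.mem_filter] at hτ ⊢
    exact ⟨Finset.mem_univ _, by rw [← card_desF]; exact hτ.2⟩
  · intro a _ b _ h
    have := congrArg Equiv.symm h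
    simpa using this
  · intro σ hσ
    rw [Finset.mem_filter] at hσ
    refine ⟨σ.symm, ?_, by simp⟩
    rw [Finset.mem_filter]
    refine ⟨Finset.mem_univ _, ?_⟩
    rw [card_desF]
    simpa using hσ.2

end EulerianVol

theorem eulerian_eq_slice_volume (d k : ℕ) (hd : 1 ≤ d) (hk1 : 1 ≤ k) (hkd : k ≤ d) :
    (eulerian d k : ℝ≥0∞) = (Nat.factorial d : ℝ≥0∞) *
      volume {x : Fin d → ℝ | (∀ i, x i ∈ Set.Icc (0 : ℝ) 1) ∧
        (k : ℝ) - 1 ≤ ∑ i, x i ∧ ∑ i, x i ≤ (k : ℝ)} := by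
  rw [EulerianVol.vol_slice_thm k hk1 hd, EulerianVol.vol_slice' k hk1 hd,
    EulerianVol.T_card k]
  have h := EulerianVol.factorial_mul_vol_delta (d := d)
  calc (eulerian d k : ℝ≥0∞)
      = (eulerian d k : ℝ≥0∞) * ((Nat.factorial d : ℝ≥0∞)
        * volume (EulerianVol.Δ (1 : Equiv.Perm (Fin d)))) := by rw [h, mul_one]
    _ = _ := by ring
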